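/- Let X be a separable F-space, Y a normed space, and (T_n : X → Y) continuous linear operators. If the set of irregular vectors for (T_n) is residual in X, then (T_n) is densely Li-Yorke chaotic: there is an uncountable dense set Γ ⊂ X such that p−q is irregular for all distinct p,q ∈ Γ. -/

import Mathlib

open Filter Topology Metric

section Shrink
variable {X : Type*} [MetricSpace X] [AddCommGroup X] [IsTopologicalAddGroup X]
set_option linter.unusedSectionVars false

/-- Place a small closed ball inside a nonempty open set. -/
lemma myc_exists_ball_in_open {W : Set X} (hW : IsOpen W) (hne : W.Nonempty) :
    ∃ c r, 0 < r ∧ closedBall c r ⊆ W := by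
  obtain ⟨x, hx⟩ := hne
  obtain ⟨ε, hε, hball⟩ := Metric.isOpen_iff.mp hW x hx
  exact ⟨x, ε / 2, by linarith, (closedBall_subset_ball (by linarith)).trans hball⟩

/-- Shrink two balls so that all differences lie in a given dense open set. -/
lemma myc_pair_shrink {U : Set X} (hU : IsOpen U) (hUd : Dense U)
    {c₁ c₂ : X} {r₁ r₂ : ℝ} (h₁ : 0 < r₁) (h₂ : 0 < r₂) :
    ∃ c₁' r₁' c₂' r₂', 0 < r₁' ∧ 0 < r₂' ∧
      closedBall c₁' r₁' ⊆ ball c₁ r₁ ∧ closedBall c₂' r₂' ⊆ ball c₂ r₂ ∧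
      ∀ p ∈ closedBall c₁' r₁', ∀ q ∈ closedBall c₂' r₂', p - q ∈ U := by
  -- find p₀ ∈ ball c₁ r₁, q₀ ∈ ball c₂ r₂ with p₀ - q₀ ∈ U
  set q₀ : X := c₂
  have hV : IsOpen {u : X | u + q₀ ∈ ball c₁ r₁} :=
    (Metric.isOpen_ball).preimage (by continuity)
  have hVne : ({u : X | u + q₀ ∈ ball c₁ r₁}).Nonempty :=
    ⟨c₁ - q₀, by simp [Metric.mem_ball, h₁]⟩
  obtain ⟨u, huU, huV⟩ := hUd.exists_mem_open hV hVne
  set p₀ : X := u + q₀ with hp₀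
  have hp₀mem : p₀ ∈ ball c₁ r₁ := huV
  have hq₀mem : q₀ ∈ ball c₂ r₂ := by simp [q₀, Metric.mem_ball, h₂]
  have hdiff : p₀ - q₀ ∈ U := by simpa [hp₀] using huU
  -- continuity of subtraction at (p₀, q₀)
  have hcont : IsOpen ((fun p : X × X => p.1 - p.2) ⁻¹' U) := hU.preimage (by continuity)
  obtain ⟨ε, hε, hball⟩ := Metric.isOpen_iff.mp hcont (p₀, q₀) hdiff
  obtain ⟨δ, hδ, hδε, hb1, hb2⟩ :
      ∃ δ, 0 < δ ∧ δ ≤ ε ∧ ball p₀ δ ⊆ ball c₁ r₁ ∧ ball q₀ δ ⊆ ball c₂ r₂ := by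
    obtain ⟨δ₁, hδ₁, h1⟩ := Metric.isOpen_iff.mp Metric.isOpen_ball p₀ hp₀mem
    obtain ⟨δ₂, hδ₂, h2⟩ := Metric.isOpen_iff.mp Metric.isOpen_ball q₀ hq₀mem
    refine ⟨min ε (min δ₁ δ₂), by positivity, min_le_left _ _,
      (ball_subset_ball ?_).trans h1, (ball_subset_ball ?_).trans h2⟩
    · exact (min_le_right _ _).trans (min_le_left _ _)
    · exact (min_le_right _ _).trans (min_le_right _ _)
  refine ⟨p₀, δ / 2, q₀, δ / 2, by linarith, by linarith,
    (closedBall_subset_ball (by linarith)).trans hb1,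
    (closedBall_subset_ball (by linarith)).trans hb2, ?_⟩
  intro p hp q hq
  have : (p, q) ∈ ball (p₀, q₀) ε := by
    rw [← ball_prod_same]
    constructor
    · exact ball_subset_ball hδε (closedBall_subset_ball (by linarith) hp)
    · exact ball_subset_ball hδε (closedBall_subset_ball (by linarith) hq)
  exact hball this

variable {ι : Type*}

/-- Shrink a family of balls so finitely many pairwise difference conditions hold. -/
lemma myc_shrink_list {U : Set X} (hU : IsOpen U) (hUd : Dense U)
    (l : List (ι × ι)) (f : ι → X × ℝ) (hf : ∀ i, 0 < (f i).2) :
    ∃ g : ι → X × ℝ, (∀ i, 0 < (g i).2) ∧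
      (∀ i, closedBall (g i).1 (g i).2 ⊆ ball (f i).1 (f i).2) ∧
      (∀ p ∈ l, p.1 ≠ p.2 → ∀ x ∈ closedBall (g p.1).1 (g p.1).2,
        ∀ y ∈ closedBall (g p.2).1 (g p.2).2, x - y ∈ U) := by
  induction l with
  | nil =>
      refine ⟨fun i => ((f i).1, (f i).2 / 2), fun i => by have := hf i; positivity,
        fun i => closedBall_subset_ball (by have := hf i; linarith), by simp⟩
  | cons hd tl ih =>
      obtain ⟨g', hg'pos, hg'sub, hg'pairs⟩ := ih
      by_cases hab : hd.1 = hd.2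
      · exact ⟨g', hg'pos, hg'sub, by
          intro p hp hne x hx y hy
          rcases List.mem_cons.mp hp with rfl | hp
          · exact absurd hab hne
          · exact hg'pairs p hp hne x hx y hy⟩
      · obtain ⟨c₁, r₁, c₂, r₂, hr₁, hr₂, hsub₁, hsub₂, hpair⟩ :=
          myc_pair_shrink hU hUd (hg'pos hd.1) (hg'pos hd.2)
        classical
        set g : ι → X × ℝ :=
          Function.update (Function.update g' hd.1 (c₁, r₁)) hd.2 (c₂, r₂) with hg
        have hga : g hd.1 = (c₁, r₁) := by
          simp [hg, Function.update_of_ne hab, Function.update_self]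
        have hgb : g hd.2 = (c₂, r₂) := by simp [hg, Function.update_self]
        have hgsub' : ∀ i, closedBall (g i).1 (g i).2 ⊆ closedBall (g' i).1 (g' i).2 := by
          intro i
          by_cases h1 : i = hd.2
          · subst h1; rw [hgb]; exact hsub₂.trans ball_subset_closedBall
          by_cases h2 : i = hd.1
          · subst h2; rw [hga]; exact hsub₁.trans ball_subset_closedBall
          · simp [hg, Function.update_of_ne h1, Function.update_of_ne h2]
        have hgpos : ∀ i, 0 < (g i).2 := by
          intro i
          by_cases h1 : i = hd.2
          · subst h1; rw [hgb]; exact hr₂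
          by_cases h2 : i = hd.1
          · subst h2; rw [hga]; exact hr₁
          · simp only [hg, Function.update_of_ne h1, Function.update_of_ne h2]; exact hg'pos i
        refine ⟨g, hgpos, fun i => (hgsub' i).trans (hg'sub i), ?_⟩
        intro p hp hne x hx y hy
        rcases List.mem_cons.mp hp with rfl | hp
        · rw [hga] at hx; rw [hgb] at hy
          exact hpair x hx y hy
        · exact hg'pairs p hp hne x (hgsub' p.1 hx) y (hgsub' p.2 hy)


abbrev MycNd := ℕ × List Bool

def mycLev (ν : MycNd) : ℕ := ν.1 + ν.2.length

def mycLists : ℕ → List (List Bool)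
  | 0 => [[]]
  | m + 1 => (mycLists m).flatMap fun σ => [true :: σ, false :: σ]

lemma mem_mycLists : ∀ {m : ℕ} {σ : List Bool}, σ.length = m → σ ∈ mycLists m := by
  intro m
  induction m with
  | zero => intro σ hσ; simp [List.length_eq_zero_iff.mp hσ, mycLists]
  | succ m ih =>
      intro σ hσ
      match σ with
      | i :: σ' =>
          simp only [List.length_cons, Nat.add_right_cancel_iff] at hσ
          simp only [mycLists, List.mem_flatMap]
          exact ⟨σ', ih hσ, by cases i <;> simp⟩

def mycNodes (n : ℕ) : List MycNd :=
  (List.range (n + 1)).flatMap fun j => (mycLists (n - j)).map fun σ => (j, σ)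

lemma mem_mycNodes {ν : MycNd} {n : ℕ} (h : mycLev ν = n) : ν ∈ mycNodes n := by
  obtain ⟨j, σ⟩ := ν
  simp only [mycLev] at h
  simp only [mycNodes, List.mem_flatMap, List.mem_map, List.mem_range]
  exact ⟨j, by omega, σ, mem_mycLists (by omega), rfl⟩

def mycPairs (n : ℕ) : List (MycNd × MycNd) :=
  (mycNodes n).flatMap fun a => (mycNodes n).map fun b => (a, b)

lemma mem_mycPairs {ν ν' : MycNd} {n : ℕ} (h : mycLev ν = n) (h' : mycLev ν' = n) :
    (ν, ν') ∈ mycPairs n := by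
  simp only [mycPairs, List.mem_flatMap, List.mem_map]
  exact ⟨ν, mem_mycNodes h, ν', mem_mycNodes h', rfl⟩


section G
variable {X : Type*} [MetricSpace X] [AddCommGroup X] [IsTopologicalAddGroup X]
set_option linter.unusedSectionVars false

def MycGood (V Bas : ℕ → Set X) (n : ℕ) (f g : MycNd → X × ℝ) : Prop :=
  (∀ ν, 0 < (g ν).2 ∧ (g ν).2 ≤ (1/2) ^ (n+1)) ∧
  (∀ (j : ℕ) (σ : List Bool) (i : Bool), closedBall (g (j, i :: σ)).1 (g (j, i :: σ)).2 ⊆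
      ball (f (j, σ)).1 (f (j, σ)).2) ∧
  (closedBall (g (n+1, ([] : List Bool))).1 (g (n+1, ([] : List Bool))).2 ⊆ Bas n) ∧
  (∀ ν ν' : MycNd, mycLev ν = n+1 → mycLev ν' = n+1 → ν ≠ ν' →
      ∀ x ∈ closedBall (g ν).1 (g ν).2, ∀ y ∈ closedBall (g ν').1 (g ν').2, x - y ∈ V n)

lemma myc_step (V Bas : ℕ → Set X) (hVo : ∀ n, IsOpen (V n)) (hVd : ∀ n, Dense (V n))
    (hBo : ∀ n, IsOpen (Bas n)) (hBne : ∀ n, (Bas n).Nonempty)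
    (n : ℕ) (f : MycNd → X × ℝ) (hf : ∀ ν, 0 < (f ν).2) :
    ∃ g, MycGood V Bas n f g := by
  obtain ⟨c₀, r₀, hr₀, hsubBas⟩ := myc_exists_ball_in_open (hBo n) (hBne n)
  classical
  set h : MycNd → X × ℝ := fun ν =>
    if ν.2 = [] then (if ν.1 = n + 1 then (c₀, r₀) else ((f ν).1, (f ν).2 / 2))
    else ((f (ν.1, ν.2.tail)).1, (f (ν.1, ν.2.tail)).2 / 2) with hh
  have hhpos : ∀ ν, 0 < (h ν).2 := by
    intro ν
    simp only [hh]
    split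
    · split
      · exact hr₀
      · have := hf ν; simpa using by linarith
    · have := hf (ν.1, ν.2.tail); simpa using by linarith
  have hhchild : ∀ (j : ℕ) (σ : List Bool) (i : Bool),
      closedBall (h (j, i :: σ)).1 (h (j, i :: σ)).2 ⊆ ball (f (j, σ)).1 (f (j, σ)).2 := by
    intro j σ i
    have : h (j, i :: σ) = ((f (j, σ)).1, (f (j, σ)).2 / 2) := by simp [hh]
    rw [this]
    exact closedBall_subset_ball (by have := hf (j, σ); linarith)
  have hhroot : closedBall (h (n+1, ([] : List Bool))).1 (h (n+1, ([] : List Bool))).2 ⊆ Bas n := by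
    have : h (n+1, ([] : List Bool)) = (c₀, r₀) := by simp [hh]
    rw [this]; exact hsubBas
  obtain ⟨g₀, hg₀pos, hg₀sub, hg₀pairs⟩ := myc_shrink_list (hVo n) (hVd n) (mycPairs (n+1)) h hhpos
  refine ⟨fun ν => ((g₀ ν).1, min (g₀ ν).2 ((1/2) ^ (n+1))), ?_, ?_, ?_, ?_⟩
  · exact fun ν => ⟨lt_min (hg₀pos ν) (by positivity), min_le_right _ _⟩
  · intro j σ i
    exact (closedBall_subset_closedBall (min_le_left _ _)).trans
      ((hg₀sub (j, i :: σ)).trans (ball_subset_closedBall.trans (hhchild j σ i)))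
  · exact (closedBall_subset_closedBall (min_le_left _ _)).trans
      ((hg₀sub (n+1, [])).trans (ball_subset_closedBall.trans hhroot))
  · intro ν ν' hν hν' hne x hx y hy
    exact hg₀pairs (ν, ν') (mem_mycPairs hν hν') hne x
      (closedBall_subset_closedBall (min_le_left _ _) hx) y
      (closedBall_subset_closedBall (min_le_left _ _) hy)

end G

end Shrink

/-- A vector `x` is irregular for the sequence of operators `(T n)` if
`liminf ‖T n x‖ = 0` and `limsup ‖T n x‖ = ∞`. -/
def Irregular {X Y : Type*} [AddCommGroup X] [Module ℂ X] [TopologicalSpace X]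
    [NormedAddCommGroup Y] [NormedSpace ℂ Y]
    (T : ℕ → X →L[ℂ] Y) (x : X) : Prop :=
  Filter.liminf (fun n => ENNReal.ofReal ‖T n x‖) Filter.atTop = 0 ∧
  Filter.limsup (fun n => ENNReal.ofReal ‖T n x‖) Filter.atTop = ⊤

/-- If `X` is a separable F-space and the set of irregular vectors for
`(T n)` is residual in `X`, then `(T n)` is densely Li-Yorke chaotic: there is an
uncountable dense set Γ such that p - q is irregular for all distinct p, q ∈ Γ. -/
theorem denselyLiYorke_of_residual_irregular
    {X Y : Type*} [AddCommGroup X] [Module ℂ X] [MetricSpace X] [CompleteSpace X]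
    [IsTopologicalAddGroup X] [ContinuousSMul ℂ X] [TopologicalSpace.SeparableSpace X]
    [NormedAddCommGroup Y] [NormedSpace ℂ Y]
    (T : ℕ → X →L[ℂ] Y)
    (h : {x : X | Irregular T x} ∈ residual X) :
    ∃ Γ : Set X, Dense Γ ∧ ¬ Γ.Countable ∧
      ∀ p ∈ Γ, ∀ q ∈ Γ, p ≠ q → Irregular T (p - q) := by
  classical
  -- 0 is not irregular
  have h0A : ¬ Irregular T 0 := by
    rintro ⟨-, hsup⟩
    have : (fun n => ENNReal.ofReal ‖T n (0 : X)‖) = fun _ => (0 : ENNReal) := by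
      funext n; simp
    rw [this, limsup_const] at hsup
    simp at hsup
  have hIrrNe : ∀ x : X, Irregular T x → x ≠ 0 := by
    rintro x hx rfl; exact h0A hx
  -- extract a sequence of dense open sets
  obtain ⟨S, hSo, hSd, hSc, hSsub⟩ := mem_residual_iff.mp h
  have hSne : S.Nonempty := by
    rcases S.eq_empty_or_nonempty with rfl | hne
    · exact absurd (hSsub (by simp)) h0A
    · exact hne
  obtain ⟨U, hU⟩ := hSc.exists_eq_range hSne
  have hUo : ∀ n, IsOpen (U n) := fun n => hSo _ (hU ▸ Set.mem_range_self n)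
  have hUd : ∀ n, Dense (U n) := fun n => hSd _ (hU ▸ Set.mem_range_self n)
  have hUsub : (⋂ n, U n) ⊆ {x : X | Irregular T x} := by
    rw [← Set.sInter_range, ← hU]; exact hSsub
  -- finite intersections
  set V : ℕ → Set X := fun n => ⋂ k ∈ Finset.range (n + 1), U k with hV
  have hVo : ∀ n, IsOpen (V n) := fun n => isOpen_biInter_finset fun k _ => hUo k
  have hVd : ∀ n, Dense (V n) := by
    intro n
    induction n with
    | zero => simpa [hV] using hUd 0
    | succ n ih =>
        have : V (n + 1) = U (n + 1) ∩ V n := by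
          simp only [hV, Finset.range_add_one, Finset.set_biInter_insert]
        rw [this]
        exact (hUd (n + 1)).inter_of_isOpen_left ih (hUo (n + 1))
  have hVsub : ∀ k n, k ≤ n → V n ⊆ U k := by
    intro k n hk
    exact Set.biInter_subset_of_mem (Finset.mem_range.mpr (by omega))
  -- basic open sets
  have : Nonempty X := ⟨0⟩
  set d : ℕ → X := TopologicalSpace.denseSeq X with hd
  have hdd : DenseRange d := TopologicalSpace.denseRange_denseSeq X
  set Bas : ℕ → Set X := fun n => ball (d n.unpair.1) (1 / (n.unpair.2 + 1)) with hBas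
  have hBo : ∀ n, IsOpen (Bas n) := fun n => isOpen_ball
  have hBne : ∀ n, (Bas n).Nonempty := fun n => ⟨d n.unpair.1, by
    simp only [hBas, mem_ball, dist_self]; positivity⟩
  -- the recursive scheme
  have hstep := myc_step V Bas hVo hVd hBo hBne
  choose! stp hstp using hstep
  set F : ℕ → MycNd → X × ℝ :=
    fun n => Nat.rec (fun _ => ((0 : X), (1 : ℝ))) (fun m f => stp m f) n with hF
  have hFs : ∀ n, F (n + 1) = stp n (F n) := fun n => rfl
  have hFpos : ∀ n ν, 0 < (F n ν).2 := by
    intro n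
    induction n with
    | zero => intro ν; norm_num [hF]
    | succ n ih =>
        intro ν
        rw [hFs]
        exact ((hstp n (F n) ih).1 ν).1
  have hGood : ∀ n, MycGood V Bas n (F n) (F (n + 1)) := by
    intro n
    rw [hFs]
    exact hstp n (F n) (hFpos n)
  have hFbound : ∀ n ν, (F n ν).2 ≤ (1 / 2) ^ n := by
    intro n ν
    cases n with
    | zero => norm_num [hF]
    | succ n => exact ((hGood n).1 ν).2
  -- prefixes
  set pref : (ℕ → Bool) → ℕ → List Bool :=
    fun b t => Nat.rec [] (fun s σ => b s :: σ) t with hpref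
  have hpref_len : ∀ b t, (pref b t).length = t := by
    intro b t
    induction t with
    | zero => rfl
    | succ t ih => simpa [hpref] using ih
  have hpref_eq : ∀ b b' t, pref b t = pref b' t → ∀ s < t, b s = b' s := by
    intro b b' t
    induction t with
    | zero => intro _ s hs; omega
    | succ t ih =>
        intro hp s hs
        have h1 : b t :: pref b t = b' t :: pref b' t := hp
        injection h1 with hhd htl
        rcases Nat.lt_succ_iff_lt_or_eq.mp hs with hs | rfl
        · exact ih htl s hs
        · exact hhd
  -- centers
  set ctr : ℕ → (ℕ → Bool) → ℕ → X := fun j b t => (F (j + t) (j, pref b t)).1 with hctr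
  have hnest1 : ∀ j b t, closedBall (F (j + t + 1) (j, pref b (t + 1))).1
      (F (j + t + 1) (j, pref b (t + 1))).2 ⊆
      ball (F (j + t) (j, pref b t)).1 (F (j + t) (j, pref b t)).2 := by
    intro j b t
    exact (hGood (j + t)).2.1 j (pref b t) (b t)
  have hnest : ∀ j b t s, t ≤ s →
      closedBall (F (j + s) (j, pref b s)).1 (F (j + s) (j, pref b s)).2 ⊆
      closedBall (F (j + t) (j, pref b t)).1 (F (j + t) (j, pref b t)).2 := by
    intro j b t s hts
    induction s, hts using Nat.le_induction with
    | base => exact subset_rfl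
    | succ s hts ih => exact ((hnest1 j b s).trans ball_subset_closedBall).trans ih
  have hctrmem : ∀ j b t s, t ≤ s →
      ctr j b s ∈ closedBall (F (j + t) (j, pref b t)).1 (F (j + t) (j, pref b t)).2 := by
    intro j b t s hts
    exact hnest j b t s hts (mem_closedBall_self (le_of_lt (hFpos _ _)))
  have hcauchy : ∀ j b, CauchySeq (ctr j b) := by
    intro j b
    apply cauchySeq_of_le_geometric (1 / 2) ((1 / 2) ^ j) (by norm_num)
    intro t
    have h1 : ctr j b (t + 1) ∈ closedBall (F (j + t) (j, pref b t)).1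
        (F (j + t) (j, pref b t)).2 := hctrmem j b t (t + 1) (by omega)
    have h2 : dist (ctr j b t) (ctr j b (t + 1)) ≤ (F (j + t) (j, pref b t)).2 := by
      rw [dist_comm]; exact h1
    calc dist (ctr j b t) (ctr j b (t + 1)) ≤ (F (j + t) (j, pref b t)).2 := h2
      _ ≤ (1 / 2) ^ (j + t) := hFbound _ _
      _ = (1 / 2) ^ j * (1 / 2) ^ t := pow_add _ _ _
  have hlim0 : ∀ j b, ∃ x, Tendsto (ctr j b) atTop (𝓝 x) :=
    fun j b => cauchySeq_tendsto_of_complete (hcauchy j b)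
  choose lim hlim using hlim0
  have hmem : ∀ j b t, lim j b ∈ closedBall (F (j + t) (j, pref b t)).1
      (F (j + t) (j, pref b t)).2 := by
    intro j b t
    refine Metric.isClosed_closedBall.mem_of_tendsto (hlim j b) ?_
    filter_upwards [eventually_ge_atTop t] with s hs
    exact hctrmem j b t s hs
  -- level-(n+1) node of a branch
  have hlevnode : ∀ j b n, j ≤ n + 1 → mycLev (j, pref b (n + 1 - j)) = n + 1 := by
    intro j b n hj
    simp [mycLev, hpref_len, Nat.add_sub_cancel' hj]
  have hmemnode : ∀ j b n, j ≤ n + 1 → lim j b ∈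
      closedBall (F (n + 1) (j, pref b (n + 1 - j))).1
        (F (n + 1) (j, pref b (n + 1 - j))).2 := by
    intro j b n hj
    have := hmem j b (n + 1 - j)
    rwa [Nat.add_sub_cancel' hj] at this
  -- key pair lemma
  have hkey : ∀ (j : ℕ) (b : ℕ → Bool) (j' : ℕ) (b' : ℕ → Bool) (n : ℕ),
      j ≤ n + 1 → j' ≤ n + 1 → (j, pref b (n + 1 - j)) ≠ (j', pref b' (n + 1 - j')) →
      lim j b - lim j' b' ∈ V n := by
    intro j b j' b' n hj hj' hne
    exact (hGood n).2.2.2 _ _ (hlevnode j b n hj) (hlevnode j' b' n hj') hne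
      _ (hmemnode j b n hj) _ (hmemnode j' b' n hj')
  have hdiff : ∀ (j : ℕ) (b : ℕ → Bool) (j' : ℕ) (b' : ℕ → Bool),
      (j, b) ≠ (j', b') → ∀ k, lim j b - lim j' b' ∈ U k := by
    intro j b j' b' hne k
    by_cases hjj : j = j'
    · subst hjj
      have hbb : b ≠ b' := fun hb => hne (by rw [hb])
      obtain ⟨m, hm⟩ := Function.ne_iff.mp hbb
      set n := max k (j + m) with hn
      have hj : j ≤ n + 1 := by omega
      refine hVsub k n (le_max_left _ _) (hkey j b j b' n hj hj ?_)
      intro hEq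
      have hp : pref b (n + 1 - j) = pref b' (n + 1 - j) := by
        simpa using congrArg Prod.snd hEq
      exact hm (hpref_eq b b' (n + 1 - j) hp m (by omega))
    · set n := max k (max j j') with hn
      have hj : j ≤ n + 1 := by omega
      have hj' : j' ≤ n + 1 := by omega
      refine hVsub k n (le_max_left _ _) (hkey j b j' b' n hj hj' ?_)
      intro hEq
      exact hjj (congrArg Prod.fst hEq)
  have hIrrDiff : ∀ (j : ℕ) (b : ℕ → Bool) (j' : ℕ) (b' : ℕ → Bool),
      (j, b) ≠ (j', b') → Irregular T (lim j b - lim j' b') := by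
    intro j b j' b' hne
    exact hUsub (Set.mem_iInter.mpr (hdiff j b j' b' hne))
  -- the set Γ
  refine ⟨Set.range (fun p : ℕ × (ℕ → Bool) => lim p.1 p.2), ?_, ?_, ?_⟩
  · -- dense
    rw [Metric.dense_iff]
    intro x ε hε
    obtain ⟨m, hm⟩ := exists_nat_one_div_lt (by linarith : (0 : ℝ) < ε / 2)
    obtain ⟨k, hk⟩ := hdd.exists_dist_lt x (by positivity : (0 : ℝ) < 1 / (m + 1))
    set n₀ := Nat.pair k m with hn₀
    set pt := lim (n₀ + 1) (fun _ => false) with hpt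
    have hpt1 : pt ∈ closedBall (F (n₀ + 1) (n₀ + 1, ([] : List Bool))).1
        (F (n₀ + 1) (n₀ + 1, ([] : List Bool))).2 := by
      have := hmem (n₀ + 1) (fun _ => false) 0
      exact this
    have hpt2 : pt ∈ Bas n₀ := (hGood n₀).2.2.1 hpt1
    have hpt3 : dist pt (d k) < 1 / (m + 1) := by
      have := hpt2
      simp only [hBas, mem_ball, hn₀, Nat.unpair_pair] at this
      simpa using this
    refine ⟨pt, ?_, ⟨(n₀ + 1, fun _ => false), rfl⟩⟩
    rw [mem_ball]
    calc dist pt x ≤ dist pt (d k) + dist (d k) x := dist_triangle _ _ _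
      _ < 1 / (m + 1) + 1 / (m + 1) := by
          rw [dist_comm (d k) x]; exact add_lt_add hpt3 hk
      _ = 2 * (1 / (m + 1)) := by ring
      _ < ε := by linarith [hm]
  · -- uncountable
    intro hcount
    have heinj : Function.Injective (fun b : ℕ → Bool => lim 0 b) := by
      intro b b' hbb
      by_contra hne
      have hne2 : ((0 : ℕ), b) ≠ ((0 : ℕ), b') := fun hEq => hne (congrArg Prod.snd hEq)
      exact hIrrNe _ (hIrrDiff 0 b 0 b' hne2) (sub_eq_zero_of_eq hbb)
    have hrange : Set.range (fun b : ℕ → Bool => lim 0 b) ⊆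
        Set.range (fun p : ℕ × (ℕ → Bool) => lim p.1 p.2) := by
      rintro x ⟨b, rfl⟩; exact ⟨(0, b), rfl⟩
    have hcr : (Set.range (fun b : ℕ → Bool => lim 0 b)).Countable := hcount.mono hrange
    have : Countable (ℕ → Bool) := by
      have := hcr.to_subtype
      exact Countable.of_equiv _ (Equiv.ofInjective _ heinj).symm
    -- Cantor diagonal
    obtain ⟨f, hf⟩ := (countable_iff_exists_injective (ℕ → Bool)).mp this
    set g : Set ℕ → (ℕ → Bool) := fun s n => if n ∈ s then true else false with hg
    have hginj : Function.Injective g := by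
      intro s t hst
      ext n
      have := congrFun hst n
      simp only [hg] at this
      by_cases hn : n ∈ s <;> by_cases hm : n ∈ t <;> simp [hn, hm] at this ⊢
    exact Function.cantor_injective (f ∘ g) (hf.comp hginj)
  · -- pair property
    rintro p ⟨⟨j, b⟩, rfl⟩ q ⟨⟨j', b'⟩, rfl⟩ hne
    refine hIrrDiff j b j' b' ?_
    rintro hEq
    exact hne (by rw [show j = j' from congrArg Prod.fst hEq,
      show b = b' from congrArg Prod.snd hEq])
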